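/- For every natural number n, the number of two-colored arc configurations on n linearly ordered points equals the n-th super Catalan (little Schröder) number S n. Here a two-colored arc configuration is a set E of pairs (i,j) with i < j in Fin n satisfying (i) whenever two distinct arcs of E share an endpoint p, then p is the left (smaller) endpoint of both arcs, and (ii) no two arcs cross (there are no arcs (i,j) and (k,l) in E with i < k < j < l), together with a function assigning to each arc of E one of two colors (black or white). -/

import Mathlib

open Finset Classical

/-- An arc configuration on `n` linearly ordered points: a set `E` of arcs `(i,j)` with
`i < j` such that (i) whenever two distinct arcs share an endpoint `p`, then `p` is the
left endpoint of both arcs, and (ii) no two arcs cross. -/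
def IsArcConfig (n : ℕ) (E : Finset (Fin n × Fin n)) : Prop :=
  (∀ a ∈ E, a.1 < a.2) ∧
  (∀ a ∈ E, ∀ b ∈ E, a ≠ b → ∀ p : Fin n,
      (p = a.1 ∨ p = a.2) → (p = b.1 ∨ p = b.2) → p = a.1 ∧ p = b.1) ∧
  ¬∃ a ∈ E, ∃ b ∈ E, a.1 < b.1 ∧ b.1 < a.2 ∧ a.2 < b.2

def NConf (n : ℕ) (E : Finset (ℕ × ℕ)) : Prop :=
  (∀ a ∈ E, a.1 < a.2 ∧ a.2 < n) ∧
  (∀ a ∈ E, ∀ b ∈ E, a ≠ b → ∀ p : ℕ,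
      (p = a.1 ∨ p = a.2) → (p = b.1 ∨ p = b.2) → p = a.1 ∧ p = b.1) ∧
  (∀ a ∈ E, ∀ b ∈ E, ¬(a.1 < b.1 ∧ b.1 < a.2 ∧ a.2 < b.2))

noncomputable def 𝒜 (n : ℕ) : Finset (Finset (ℕ × ℕ)) :=
  (Finset.range n ×ˢ Finset.range n).powerset.filter fun E => NConf n E

lemma mem_𝒜 {n : ℕ} {E : Finset (ℕ × ℕ)} : E ∈ 𝒜 n ↔ NConf n E := by
  simp only [𝒜, mem_filter, mem_powerset, and_iff_right_iff_imp]
  intro h a ha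
  have := h.1 a ha
  simp only [Finset.mem_product, Finset.mem_range]
  omega

noncomputable def G (n : ℕ) : ℕ := ∑ E ∈ 𝒜 n, 2 ^ E.card

def shiftP (i : ℕ) : ℕ × ℕ → ℕ × ℕ := fun a => (a.1 + i, a.2 + i)
def unshiftP (i : ℕ) : ℕ × ℕ → ℕ × ℕ := fun a => (a.1 - i, a.2 - i)

lemma shiftP_inj (i : ℕ) : Function.Injective (shiftP i) := by
  rintro ⟨a1, a2⟩ ⟨b1, b2⟩ h
  simp only [shiftP, Prod.mk.injEq] at h ⊢
  omega

noncomputable def Φ (n i : ℕ) (p : Finset (ℕ × ℕ) × Finset (ℕ × ℕ)) : Finset (ℕ × ℕ) :=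
  insert (i, n) (p.1 ∪ p.2.image (shiftP i))

noncomputable def Ψ (n i : ℕ) (E : Finset (ℕ × ℕ)) : Finset (ℕ × ℕ) × Finset (ℕ × ℕ) :=
  (E.filter (fun a => a.2 < i), (E.filter (fun a => i ≤ a.1 ∧ a.2 < n)).image (unshiftP i))

lemma mem_Φ {n i : ℕ} {E₁ E₂ : Finset (ℕ × ℕ)} {a : ℕ × ℕ} :
    a ∈ Φ n i (E₁, E₂) ↔ a = (i, n) ∨ a ∈ E₁ ∨ ∃ b ∈ E₂, a = (b.1 + i, b.2 + i) := by
  simp only [Φ, mem_insert, mem_union, mem_image, shiftP]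
  constructor
  · rintro (h | h | ⟨b, hb, rfl⟩)
    · exact Or.inl h
    · exact Or.inr (Or.inl h)
    · exact Or.inr (Or.inr ⟨b, hb, rfl⟩)
  · rintro (h | h | ⟨b, hb, rfl⟩)
    · exact Or.inl h
    · exact Or.inr (Or.inl h)
    · exact Or.inr (Or.inr ⟨b, hb, rfl⟩)

lemma Phi_conf {n i : ℕ} (hi : i < n) {E₁ E₂ : Finset (ℕ × ℕ)}
    (h1 : NConf i E₁) (h2 : NConf (n - i) E₂) : NConf (n + 1) (Φ n i (E₁, E₂)) := by
  obtain ⟨b1, c1, x1⟩ := h1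
  obtain ⟨b2, c2, x2⟩ := h2
  refine ⟨?_, ?_, ?_⟩
  · intro a ha
    rcases mem_Φ.1 ha with rfl | h | ⟨b, hb, rfl⟩
    · simp; omega
    · have := b1 a h; omega
    · have := b2 b hb; simp; omega
  · intro a ha b hb hab p hpa hpb
    rcases mem_Φ.1 ha with rfl | ha1 | ⟨a', ha', rfl⟩ <;>
      rcases mem_Φ.1 hb with rfl | hb1 | ⟨b', hb', rfl⟩
    · exact absurd rfl hab
    · have := b1 b hb1; simp only at hpa hpb ⊢; omega
    · have := b2 b' hb'; simp only at hpa hpb ⊢; omega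
    · have := b1 a ha1; simp only at hpa hpb ⊢; omega
    · exact c1 a ha1 b hb1 hab p hpa hpb
    · have := b1 a ha1; have := b2 b' hb'; simp only at hpa hpb ⊢; omega
    · have := b2 a' ha'; simp only at hpa hpb ⊢; omega
    · have := b2 a' ha'; have := b1 b hb1; simp only at hpa hpb ⊢; omega
    · have hne : a' ≠ b' := by rintro rfl; exact hab rfl
      have ba := b2 a' ha'
      have bb := b2 b' hb'
      have := c2 a' ha' b' hb' hne (p - i) (by simp only at hpa; omega)
        (by simp only at hpb; omega)
      simp only at hpa hpb ⊢
      omega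
  · intro a ha b hb hc
    rcases mem_Φ.1 ha with rfl | ha1 | ⟨a', ha', rfl⟩ <;>
      rcases mem_Φ.1 hb with rfl | hb1 | ⟨b', hb', rfl⟩
    · simp only at hc; omega
    · have := b1 b hb1; simp only at hc; omega
    · have := b2 b' hb'; simp only at hc; omega
    · have := b1 a ha1; simp only at hc; omega
    · exact x1 a ha1 b hb1 hc
    · have := b1 a ha1; have := b2 b' hb'; simp only at hc; omega
    · have := b2 a' ha'; simp only at hc; omega
    · have := b2 a' ha'; have := b1 b hb1; simp only at hc; omega
    · exact x2 a' ha' b' hb' (by simp only at hc; omega)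

lemma struct {n i : ℕ} {E : Finset (ℕ × ℕ)} (hE : NConf (n + 1) E) (hin : (i, n) ∈ E) :
    ∀ a ∈ E, a ≠ (i, n) → a.2 < i ∨ (i ≤ a.1 ∧ a.2 < n) := by
  obtain ⟨b, c, x⟩ := hE
  intro a ha hne
  have hba := b a ha
  have hbi := b _ hin
  simp only at hbi
  -- a.2 ≠ n
  have h2n : a.2 ≠ n := by
    intro h
    have := c a ha _ hin hne n (Or.inr h.symm) (Or.inr rfl)
    omega
  -- a.2 ≠ i
  have h2i : a.2 ≠ i := by
    intro h
    have := c a ha _ hin hne i (Or.inr h.symm) (Or.inl rfl)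
    omega
  -- a.1 ≠ n (trivial), not crossing
  have hcr := x a ha _ hin
  simp only at hcr
  -- a.1 = i case is fine (goes right)
  omega

lemma uniq_arc {n i : ℕ} {E : Finset (ℕ × ℕ)} (hE : NConf (n + 1) E) (hin : (i, n) ∈ E) :
    ∀ a ∈ E, a.2 = n → a = (i, n) := by
  intro a ha h2
  by_contra hne
  have := hE.2.1 a ha _ hin hne n (Or.inr h2.symm) (Or.inr rfl)
  have := hE.1 a ha
  omega

lemma Psi_conf1 {n i : ℕ} {E : Finset (ℕ × ℕ)} (hE : NConf (n + 1) E) :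
    NConf i (E.filter (fun a => a.2 < i)) := by
  obtain ⟨b, c, x⟩ := hE
  refine ⟨?_, ?_, ?_⟩
  · intro a ha
    rw [mem_filter] at ha
    exact ⟨(b a ha.1).1, ha.2⟩
  · intro a ha b' hb' hab p hpa hpb
    rw [mem_filter] at ha hb'
    exact c a ha.1 b' hb'.1 hab p hpa hpb
  · intro a ha b' hb'
    rw [mem_filter] at ha hb'
    exact x a ha.1 b' hb'.1

lemma Psi_conf2 {n i : ℕ} {E : Finset (ℕ × ℕ)} (hE : NConf (n + 1) E) :
    NConf (n - i) ((E.filter (fun a => i ≤ a.1 ∧ a.2 < n)).image (unshiftP i)) := by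
  obtain ⟨b, c, x⟩ := hE
  have mem : ∀ a', a' ∈ (E.filter (fun a => i ≤ a.1 ∧ a.2 < n)).image (unshiftP i) ↔
      ∃ a, (a ∈ E ∧ i ≤ a.1 ∧ a.2 < n) ∧ a' = (a.1 - i, a.2 - i) := by
    intro a'
    simp only [mem_image, mem_filter, unshiftP]
    constructor
    · rintro ⟨a, ha, rfl⟩; exact ⟨a, ha, rfl⟩
    · rintro ⟨a, ha, rfl⟩; exact ⟨a, ha, rfl⟩
  refine ⟨?_, ?_, ?_⟩
  · intro a' ha'
    obtain ⟨a, ⟨ha, hia, hna⟩, rfl⟩ := (mem _).1 ha'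
    have := b a ha
    simp only
    omega
  · intro a' ha' b' hb' hab p' hpa hpb
    obtain ⟨a, ⟨ha, hia, hna⟩, rfl⟩ := (mem _).1 ha'
    obtain ⟨bb, ⟨hbb, hib, hnb⟩, rfl⟩ := (mem _).1 hb'
    have hba := b a ha
    have hbb' := b bb hbb
    have hne : a ≠ bb := by rintro rfl; exact hab rfl
    simp only at hpa hpb ⊢
    have := c a ha bb hbb hne (p' + i) (by omega) (by omega)
    omega
  · intro a' ha' b' hb'
    obtain ⟨a, ⟨ha, hia, hna⟩, rfl⟩ := (mem _).1 ha'
    obtain ⟨bb, ⟨hbb, hib, hnb⟩, rfl⟩ := (mem _).1 hb'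
    have hba := b a ha
    have hbb' := b bb hbb
    intro hc
    simp only at hc
    exact x a ha bb hbb (by omega)

lemma Phi_Psi {n i : ℕ} {E : Finset (ℕ × ℕ)} (hE : NConf (n + 1) E) (hin : (i, n) ∈ E) :
    Φ n i (Ψ n i E) = E := by
  have hi : i < n := (hE.1 _ hin).1
  ext a
  rw [show Ψ n i E = ((Ψ n i E).1, (Ψ n i E).2) from rfl, mem_Φ]
  simp only [Ψ]
  constructor
  · rintro (rfl | h | ⟨b, hb, rfl⟩)
    · exact hin
    · exact (mem_filter.1 h).1
    · simp only [mem_image, mem_filter, unshiftP] at hb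
      obtain ⟨c, ⟨hc, hic, hnc⟩, rfl⟩ := hb
      have := hE.1 c hc
      have : (c.1 - i + i, c.2 - i + i) = c := by
        rw [Prod.ext_iff]; simp only; omega
      rw [this]
      exact hc
  · intro ha
    by_cases hne : a = (i, n)
    · exact Or.inl hne
    rcases struct hE hin a ha hne with h | h
    · exact Or.inr (Or.inl (mem_filter.2 ⟨ha, h⟩))
    · refine Or.inr (Or.inr ⟨(a.1 - i, a.2 - i), ?_, ?_⟩)
      · simp only [mem_image, mem_filter, unshiftP]
        exact ⟨a, ⟨ha, h⟩, rfl⟩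
      · rw [Prod.ext_iff]
        have := hE.1 a ha
        simp only
        omega

lemma Psi_Phi {n i : ℕ} (hi : i < n) {E₁ E₂ : Finset (ℕ × ℕ)}
    (h1 : NConf i E₁) (h2 : NConf (n - i) E₂) : Ψ n i (Φ n i (E₁, E₂)) = (E₁, E₂) := by
  have hfilt1 : (Φ n i (E₁, E₂)).filter (fun a => a.2 < i) = E₁ := by
    ext a
    rw [mem_filter, mem_Φ]
    constructor
    · rintro ⟨rfl | h | ⟨b, hb, rfl⟩, h2'⟩
      · simp only at h2'; omega
      · exact h
      · have := h2.1 b hb; simp only at h2'; omega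
    · intro h
      exact ⟨Or.inr (Or.inl h), (h1.1 a h).2⟩
  have hfilt2 : (Φ n i (E₁, E₂)).filter (fun a => i ≤ a.1 ∧ a.2 < n) = E₂.image (shiftP i) := by
    ext a
    rw [mem_filter, mem_Φ]
    simp only [mem_image, shiftP]
    constructor
    · rintro ⟨rfl | h | ⟨b, hb, rfl⟩, h2'⟩
      · simp only at h2'; omega
      · have := h1.1 a h; omega
      · exact ⟨b, hb, rfl⟩
    · rintro ⟨b, hb, rfl⟩
      have := h2.1 b hb
      exact ⟨Or.inr (Or.inr ⟨b, hb, rfl⟩), by simp only; omega⟩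
  rw [Ψ, hfilt1, hfilt2, Finset.image_image, Prod.mk.injEq]
  refine ⟨rfl, ?_⟩
  rw [Finset.image_congr (g := id), Finset.image_id]
  intro a _
  simp only [Function.comp, unshiftP, shiftP, id]
  rw [Prod.ext_iff]
  simp only
  omega

lemma Phi_card {n i : ℕ} (hi : i < n) {E₁ E₂ : Finset (ℕ × ℕ)}
    (h1 : NConf i E₁) (h2 : NConf (n - i) E₂) :
    (Φ n i (E₁, E₂)).card = E₁.card + E₂.card + 1 := by
  have hnm : (i, n) ∉ E₁ ∪ E₂.image (shiftP i) := by
    rw [mem_union]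
    rintro (h | h)
    · have := h1.1 _ h; simp only at this; omega
    · simp only [mem_image, shiftP] at h
      obtain ⟨b, hb, hb2⟩ := h
      have := h2.1 b hb
      rw [Prod.ext_iff] at hb2
      simp only at hb2
      omega
  have hdisj : Disjoint E₁ (E₂.image (shiftP i)) := by
    rw [Finset.disjoint_left]
    intro a ha hb
    simp only [mem_image, shiftP] at hb
    obtain ⟨b, hb, rfl⟩ := hb
    have := h1.1 _ ha
    have := h2.1 b hb
    simp only at *
    omega
  rw [Φ, Finset.card_insert_of_notMem hnm, Finset.card_union_of_disjoint hdisj,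
    Finset.card_image_of_injective _ (shiftP_inj i)]

lemma sum_Ci (n i : ℕ) (hi : i < n) :
    ∑ E ∈ (𝒜 (n + 1)).filter (fun E => (i, n) ∈ E), 2 ^ E.card
      = 2 * (G i * G (n - i)) := by
  classical
  have := Finset.sum_nbij' (i := fun E => Ψ n i E) (j := fun p => Φ n i p)
    (s := (𝒜 (n + 1)).filter (fun E => (i, n) ∈ E)) (t := 𝒜 i ×ˢ 𝒜 (n - i))
    (f := fun E => 2 ^ E.card) (g := fun p => 2 ^ (p.1.card + p.2.card + 1))
    ?_ ?_ ?_ ?_ ?_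
  · rw [this]
    rw [Finset.sum_product]
    have : ∀ E₁ : Finset (ℕ × ℕ), ∑ E₂ ∈ 𝒜 (n - i), 2 ^ (E₁.card + E₂.card + 1)
        = 2 ^ E₁.card * (2 * G (n - i)) := by
      intro E₁
      rw [G, Finset.mul_sum, Finset.mul_sum]
      refine Finset.sum_congr rfl fun E₂ _ => ?_
      ring
    rw [Finset.sum_congr rfl fun E₁ _ => this E₁, ← Finset.sum_mul, ← G]
    ring
  · intro E hE
    rw [mem_filter] at hE
    have h := mem_𝒜.1 hE.1
    rw [Finset.mem_product]
    exact ⟨mem_𝒜.2 (Psi_conf1 h), mem_𝒜.2 (Psi_conf2 h)⟩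
  · intro p hp
    rw [Finset.mem_product] at hp
    rw [mem_filter]
    constructor
    · rw [mem_𝒜]
      rw [show p = (p.1, p.2) from rfl]
      exact Phi_conf hi (mem_𝒜.1 hp.1) (mem_𝒜.1 hp.2)
    · rw [show p = (p.1, p.2) from rfl]
      exact mem_Φ.2 (Or.inl rfl)
  · intro E hE
    rw [mem_filter] at hE
    exact Phi_Psi (mem_𝒜.1 hE.1) hE.2
  · intro p hp
    rw [Finset.mem_product] at hp
    rw [show p = (p.1, p.2) from rfl]
    exact Psi_Phi hi (mem_𝒜.1 hp.1) (mem_𝒜.1 hp.2)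
  · intro E hE
    rw [mem_filter] at hE
    have h := mem_𝒜.1 hE.1
    have e1 := Phi_Psi h hE.2
    have hmem : Ψ n i E ∈ 𝒜 i ×ˢ 𝒜 (n - i) := by
      rw [Finset.mem_product]
      exact ⟨mem_𝒜.2 (Psi_conf1 h), mem_𝒜.2 (Psi_conf2 h)⟩
    rw [Finset.mem_product] at hmem
    have := Phi_card hi (mem_𝒜.1 hmem.1) (mem_𝒜.1 hmem.2)
    rw [show ((Ψ n i E).1, (Ψ n i E).2) = Ψ n i E from rfl, e1] at this
    simp only [this]

lemma G_rec (n : ℕ) : G (n + 1) = G n + ∑ i ∈ Finset.range n, 2 * (G i * G (n - i)) := by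
  classical
  rw [G, ← Finset.sum_filter_add_sum_filter_not (𝒜 (n + 1)) (fun E => ∀ a ∈ E, a.2 ≠ n)]
  congr 1
  · -- filter part = G n
    rw [G]
    congr 1
    ext E
    rw [mem_filter, mem_𝒜, mem_𝒜]
    constructor
    · rintro ⟨⟨b, c, x⟩, hP⟩
      refine ⟨fun a ha => ⟨(b a ha).1, ?_⟩, c, x⟩
      have := (b a ha).2
      have := hP a ha
      omega
    · rintro ⟨b, c, x⟩
      refine ⟨⟨fun a ha => ⟨(b a ha).1, by have := (b a ha).2; omega⟩, c, x⟩, ?_⟩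
      intro a ha
      have := (b a ha).2
      omega
  · -- the rest
    have hsplit : (𝒜 (n + 1)).filter (fun E => ¬ ∀ a ∈ E, a.2 ≠ n)
        = (Finset.range n).biUnion (fun i => (𝒜 (n + 1)).filter (fun E => (i, n) ∈ E)) := by
      ext E
      rw [mem_filter, Finset.mem_biUnion]
      push_neg
      constructor
      · rintro ⟨hE, a, ha, h2⟩
        have h := mem_𝒜.1 hE
        have hb := h.1 a ha
        refine ⟨a.1, Finset.mem_range.2 (by omega), ?_⟩
        rw [mem_filter]
        refine ⟨hE, ?_⟩
        have : a = (a.1, n) := by rw [Prod.ext_iff]; exact ⟨rfl, h2⟩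
        rwa [← this]
      · rintro ⟨i, hi, hE⟩
        rw [mem_filter] at hE
        exact ⟨hE.1, (i, n), hE.2, rfl⟩
    rw [hsplit, Finset.sum_biUnion, Finset.sum_congr rfl]
    · intro i hi
      exact sum_Ci n i (Finset.mem_range.1 hi)
    · -- pairwise disjoint
      intro i hi j hj hij
      simp only [Function.onFun]
      rw [Finset.disjoint_left]
      intro E hEi hEj
      rw [mem_filter] at hEi hEj
      have h := mem_𝒜.1 hEi.1
      have := uniq_arc h hEi.2 (j, n) hEj.2 rfl
      rw [Prod.ext_iff] at this
      exact hij this.1.symm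

lemma G_zero : G 0 = 1 := by
  have : 𝒜 0 = {∅} := by
    ext E
    simp only [mem_𝒜, Finset.mem_singleton]
    constructor
    · intro h
      ext a
      simp only [Finset.notMem_empty, iff_false]
      intro ha
      exact absurd (h.1 a ha).2 (Nat.not_lt_zero _)
    · rintro rfl
      exact ⟨by simp, by simp, by simp⟩
  simp [G, this]

lemma G_eq_S (S : ℕ → ℕ) (hS0 : S 0 = 1)
    (hSrec : ∀ n, S (n + 1) + S n = 2 * ∑ i ∈ Finset.range (n + 1), S i * S (n - i)) :
    ∀ n, G n = S n := by
  intro n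
  induction n using Nat.strong_induction_on with
  | _ n ih =>
    match n with
    | 0 => rw [G_zero, hS0]
    | n + 1 =>
      have hGn : G n = S n := ih n (by omega)
      have hsum : ∑ i ∈ Finset.range n, 2 * (G i * G (n - i))
          = ∑ i ∈ Finset.range n, 2 * (S i * S (n - i)) := by
        refine Finset.sum_congr rfl fun i hi => ?_
        rw [Finset.mem_range] at hi
        rw [ih i (by omega), ih (n - i) (by omega)]
      have key := hSrec n
      rw [Finset.sum_range_succ, Nat.sub_self, hS0] at key
      have : ∑ i ∈ Finset.range n, 2 * (S i * S (n - i))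
          = 2 * ∑ i ∈ Finset.range n, S i * S (n - i) := by
        rw [Finset.mul_sum]
      rw [G_rec, hGn, hsum, this]
      omega

def fmap (n : ℕ) : Fin n × Fin n → ℕ × ℕ := fun a => (a.1.1, a.2.1)

noncomputable def vmap (n : ℕ) (hn : 0 < n) : ℕ × ℕ → Fin n × Fin n :=
  fun a => (⟨a.1 % n, Nat.mod_lt _ hn⟩, ⟨a.2 % n, Nat.mod_lt _ hn⟩)

lemma fmap_inj (n : ℕ) : Function.Injective (fmap n) := by
  rintro ⟨a1, a2⟩ ⟨b1, b2⟩ h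
  simp only [fmap, Prod.mk.injEq] at h
  exact Prod.ext (Fin.ext h.1) (Fin.ext h.2)

lemma vmap_fmap (n : ℕ) (hn : 0 < n) (a : Fin n × Fin n) : vmap n hn (fmap n a) = a := by
  simp only [vmap, fmap]
  exact Prod.ext (Fin.ext (Nat.mod_eq_of_lt a.1.2)) (Fin.ext (Nat.mod_eq_of_lt a.2.2))

lemma fmap_vmap (n : ℕ) (hn : 0 < n) (a : ℕ × ℕ) (h1 : a.1 < n) (h2 : a.2 < n) :
    fmap n (vmap n hn a) = a := by
  simp only [vmap, fmap]
  exact Prod.ext (Nat.mod_eq_of_lt h1) (Nat.mod_eq_of_lt h2)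

lemma transfer1 {n : ℕ} {E : Finset (Fin n × Fin n)} (h : IsArcConfig n E) :
    NConf n (E.image (fmap n)) := by
  obtain ⟨h1, h2, h3⟩ := h
  refine ⟨?_, ?_, ?_⟩
  · rintro a ha
    simp only [mem_image] at ha
    obtain ⟨b, hb, rfl⟩ := ha
    exact ⟨h1 b hb, b.2.2⟩
  · rintro a' ha' b' hb' hab p hpa hpb
    simp only [mem_image] at ha' hb'
    obtain ⟨a, ha, rfl⟩ := ha'
    obtain ⟨b, hb, rfl⟩ := hb'
    have hne : a ≠ b := fun h => hab (by rw [h])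
    have hp : p < n := by
      rcases hpa with h' | h' <;> subst h'
      · exact a.1.2
      · exact a.2.2
    have := h2 a ha b hb hne ⟨p, hp⟩ ?_ ?_
    · exact ⟨congrArg Fin.val this.1, congrArg Fin.val this.2⟩
    · rcases hpa with h' | h'
      · exact Or.inl (Fin.ext h')
      · exact Or.inr (Fin.ext h')
    · rcases hpb with h' | h'
      · exact Or.inl (Fin.ext h')
      · exact Or.inr (Fin.ext h')
  · rintro a' ha' b' hb' ⟨hc1, hc2, hc3⟩
    simp only [mem_image] at ha' hb'
    obtain ⟨a, ha, rfl⟩ := ha'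
    obtain ⟨b, hb, rfl⟩ := hb'
    exact h3 ⟨a, ha, b, hb, hc1, hc2, hc3⟩

lemma transfer2 {n : ℕ} (hn : 0 < n) {E : Finset (ℕ × ℕ)} (h : NConf n E) :
    IsArcConfig n (E.image (vmap n hn)) := by
  obtain ⟨h1, h2, h3⟩ := h
  have key : ∀ a ∈ E, fmap n (vmap n hn a) = a := fun a ha =>
    fmap_vmap n hn a (lt_trans (h1 a ha).1 (h1 a ha).2) (h1 a ha).2
  refine ⟨?_, ?_, ?_⟩
  · rintro a' ha'
    simp only [mem_image] at ha'
    obtain ⟨a, ha, rfl⟩ := ha'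
    have hb := h1 a ha
    show (vmap n hn a).1.1 < (vmap n hn a).2.1
    have := key a ha
    simp only [fmap, Prod.ext_iff] at this
    omega
  · rintro a' ha' b' hb' hab p hpa hpb
    simp only [mem_image] at ha' hb'
    obtain ⟨a, ha, rfl⟩ := ha'
    obtain ⟨b, hb, rfl⟩ := hb'
    have hne : a ≠ b := by
      intro h'
      exact hab (by rw [h'])
    have ea := key a ha
    have eb := key b hb
    simp only [fmap, Prod.ext_iff] at ea eb
    have := h2 a ha b hb hne p.1 ?_ ?_
    · constructor
      · apply Fin.ext; rw [this.1]; exact ea.1.symm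
      · apply Fin.ext; rw [this.2]; exact eb.1.symm
    · rcases hpa with h' | h'
      · exact Or.inl (by rw [h']; exact ea.1)
      · exact Or.inr (by rw [h']; exact ea.2)
    · rcases hpb with h' | h'
      · exact Or.inl (by rw [h']; exact eb.1)
      · exact Or.inr (by rw [h']; exact eb.2)
  · rintro ⟨a', ha', b', hb', hc1, hc2, hc3⟩
    simp only [mem_image] at ha' hb'
    obtain ⟨a, ha, rfl⟩ := ha'
    obtain ⟨b, hb, rfl⟩ := hb'
    have ea := key a ha
    have eb := key b hb
    simp only [fmap, Prod.ext_iff] at ea eb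
    apply h3 a ha b hb
    simp only [Fin.lt_def] at hc1 hc2 hc3
    omega

set_option maxHeartbeats 1000000 in
lemma sum_fin_eq_G (n : ℕ) [DecidablePred (IsArcConfig n)] :
    ∑ E ∈ Finset.univ.filter (fun E => IsArcConfig n E), 2 ^ E.card = G n := by
  rcases Nat.eq_zero_or_pos n with rfl | hn
  · have h1 : (Finset.univ.filter (fun E : Finset (Fin 0 × Fin 0) => IsArcConfig 0 E)) = {∅} := by
      ext E
      simp only [mem_filter, mem_univ, true_and, Finset.mem_singleton]
      constructor
      · intro _
        ext ⟨a, b⟩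
        exact absurd a.2 (Nat.not_lt_zero _)
      · rintro rfl
        exact ⟨by simp, by simp, by simp⟩
    have h2 : 𝒜 0 = {∅} := by
      ext E
      simp only [mem_𝒜, Finset.mem_singleton]
      constructor
      · intro h
        ext a
        simp only [Finset.notMem_empty, iff_false]
        intro ha
        exact absurd (h.1 a ha).2 (Nat.not_lt_zero _)
      · rintro rfl
        exact ⟨by simp, by simp, by simp⟩
    rw [h1, G, h2]
    simp
  · rw [G]
    refine Finset.sum_nbij' (i := fun E => E.image (fmap n))
      (j := fun E' => E'.image (vmap n hn)) ?_ ?_ ?_ ?_ ?_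
    · intro E hE
      rw [mem_𝒜]
      exact transfer1 (by simpa using hE)
    · intro E' hE'
      simp only [mem_filter, mem_univ, true_and]
      exact transfer2 hn (mem_𝒜.1 hE')
    · intro E hE
      show (E.image (fmap n)).image (vmap n hn) = E
      rw [Finset.image_image]
      have : (vmap n hn) ∘ (fmap n) = id := funext (vmap_fmap n hn)
      rw [this, Finset.image_id]
    · intro E' hE'
      show (E'.image (vmap n hn)).image (fmap n) = E'
      rw [Finset.image_image]
      have h := mem_𝒜.1 hE'
      rw [Finset.image_congr (g := id) ?_, Finset.image_id]
      intro a ha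
      exact fmap_vmap n hn a (lt_trans (h.1 a ha).1 (h.1 a ha).2) (h.1 a ha).2
    · intro E hE
      rw [Finset.card_image_of_injective _ (fmap_inj n)]

set_option maxHeartbeats 400000 in
lemma card_eq_sum (n : ℕ) [DecidablePred (IsArcConfig n)] :
    Nat.card {p : Σ E : Finset (Fin n × Fin n), {a : Fin n × Fin n // a ∈ E} → Bool //
        IsArcConfig n p.1}
    = ∑ E ∈ Finset.univ.filter (fun E => IsArcConfig n E), 2 ^ E.card := by
  have e : {p : Σ E : Finset (Fin n × Fin n), {a : Fin n × Fin n // a ∈ E} → Bool //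
        IsArcConfig n p.1} ≃
      Σ E : {E : Finset (Fin n × Fin n) // IsArcConfig n E}, ({a // a ∈ E.1} → Bool) :=
    { toFun := fun x => ⟨⟨x.1.1, x.2⟩, x.1.2⟩
      invFun := fun y => ⟨⟨y.1.1, y.2⟩, y.1.2⟩
      left_inv := fun x => rfl
      right_inv := fun y => rfl }
  rw [Nat.card_congr e, Nat.card_eq_fintype_card, Fintype.card_sigma]
  have h1 : ∀ E : {E : Finset (Fin n × Fin n) // IsArcConfig n E},
      Fintype.card ({a // a ∈ E.1} → Bool) = 2 ^ E.1.card := by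
    intro E
    rw [Fintype.card_fun, Fintype.card_coe, Fintype.card_bool]
  rw [Fintype.sum_congr _ _ h1]
  exact (Finset.sum_subtype (Finset.univ.filter (fun E => IsArcConfig n E)) (by simp) (fun E : Finset (Fin n × Fin n) => 2 ^ E.card)).symm

/-- The number of two-colored arc configurations on `n` linearly ordered points (an arc
configuration together with a black/white coloring of its arcs) equals the `n`-th super
Catalan (little Schröder) number `S n`, where `S 0 = 1` and
`S (n+1) + S n = 2 * ∑_{i=0}^{n} S i * S (n-i)`. -/
theorem card_coloredArcConfig_eq_superCatalan (S : ℕ → ℕ) (hS0 : S 0 = 1)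
    (hSrec : ∀ n, S (n + 1) + S n = 2 * ∑ i ∈ Finset.range (n + 1), S i * S (n - i))
    (n : ℕ) :
    Nat.card {p : Σ E : Finset (Fin n × Fin n), {a : Fin n × Fin n // a ∈ E} → Bool //
        IsArcConfig n p.1} = S n := by
  classical
  rw [card_eq_sum n, sum_fin_eq_G n, G_eq_S S hS0 hSrec n]
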